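/- Let X be a W-hyperbolic space, (T_n : X → X) nonexpansive with common fixed point p, (γ_n) with γ_n = (n+2)/(n+1) satisfying d(T_n y, T_m y) ≤ (|γ_n - γ_m|/γ_n)·d(y, T_n y) for all y, n, m, α_n = 1 - 2/(n+2), x_0 = x, x_{n+1} = (1-α_n)u + α_n T_n(x_n), and M ≥ max{d(x,p), d(u,p)}. Then for all n: d(x_{n+1}, x_n) ≤ 6M/(n+2). -/

import Mathlib

theorem stmt16 {X : Type*} [MetricSpace X] (W : X → X → ℝ → X)
    (W1 : ∀ (x y z : X), ∀ l ∈ Set.Icc (0:ℝ) 1,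
      dist z (W x y l) ≤ (1 - l) * dist z x + l * dist z y)
    (W2 : ∀ (x y : X), ∀ l ∈ Set.Icc (0:ℝ) 1, ∀ m ∈ Set.Icc (0:ℝ) 1,
      dist (W x y l) (W x y m) = |l - m| * dist x y)
    (W3 : ∀ (x y : X), ∀ l ∈ Set.Icc (0:ℝ) 1, W x y l = W y x (1 - l))
    (W4 : ∀ (x y z w : X), ∀ l ∈ Set.Icc (0:ℝ) 1,
      dist (W x z l) (W y w l) ≤ (1 - l) * dist x y + l * dist z w)
    (T : ℕ → X → X)
    (hT : ∀ n, ∀ (x y : X), dist (T n x) (T n y) ≤ dist x y)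
    (p : X) (hfix : ∀ n, T n p = p)
    (u x₀ : X) (α : ℕ → ℝ)
    (x : ℕ → X) (hx0 : x 0 = x₀)
    (hxrec : ∀ n, x (n + 1) = W u (T n (x n)) (α n))
    (hα : ∀ n, α n = 1 - 2 / (n + 2))
    (γ : ℕ → ℝ) (hγ : ∀ n, γ n = (n + 2) / (n + 1))
    (hC1 : ∀ (y : X) (n m : ℕ), dist (T n y) (T m y) ≤ (|γ n - γ m| / γ n) * dist y (T n y))
    (M : ℝ) (hM : 0 < M) (hM1 : dist x₀ p ≤ M) (hM2 : dist u p ≤ M) :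
    ∀ n, dist (x (n + 1)) (x n) ≤ 6 * M / (n + 2) := by
  have hαval : ∀ k : ℕ, α k = (k : ℝ) / (k + 2) := by
    intro k
    rw [hα]
    have h2 : (k:ℝ) + 2 ≠ 0 := by positivity
    field_simp
    ring
  have hαmem : ∀ k : ℕ, α k ∈ Set.Icc (0:ℝ) 1 := by
    intro k
    rw [hαval]
    constructor
    · positivity
    · rw [div_le_one (by positivity)]
      have : (0:ℝ) ≤ (k:ℝ) := Nat.cast_nonneg k
      linarith
  have hbnd : ∀ k, dist (x k) p ≤ M := by
    intro k
    induction k with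
    | zero => rw [hx0]; exact hM1
    | succ k ih =>
      rw [hxrec k]
      have h1 := W1 u (T k (x k)) p (α k) (hαmem k)
      have h2 : dist p (T k (x k)) ≤ dist (x k) p := by
        calc dist p (T k (x k)) = dist (T k p) (T k (x k)) := by rw [hfix]
          _ ≤ dist p (x k) := hT k p (x k)
          _ = dist (x k) p := dist_comm _ _
      have hα0 := (hαmem k).1
      have hα1 := (hαmem k).2
      have hpu : dist p u ≤ M := by rw [dist_comm]; exact hM2
      calc dist (W u (T k (x k)) (α k)) p = dist p (W u (T k (x k)) (α k)) := dist_comm _ _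
        _ ≤ (1 - α k) * dist p u + α k * dist p (T k (x k)) := h1
        _ ≤ M := by nlinarith
  have hpt : ∀ k m : ℕ, dist p (T k (x m)) ≤ M := by
    intro k m
    calc dist p (T k (x m)) = dist (T k p) (T k (x m)) := by rw [hfix]
      _ ≤ dist p (x m) := hT k p (x m)
      _ = dist (x m) p := dist_comm _ _
      _ ≤ M := hbnd m
  intro n
  induction n with
  | zero =>
    have h1 := hbnd 1
    have h0 := hbnd 0
    have ht := dist_triangle (x 1) p (x 0)
    have h0' : dist p (x 0) = dist (x 0) p := dist_comm _ _
    have h2 : (6:ℝ) * M / ((0:ℕ) + 2) = 3 * M := by push_cast; ring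
    rw [h2]
    linarith
  | succ n ih =>
    have ha : (0:ℝ) ≤ (n:ℝ) := Nat.cast_nonneg n
    have hαd : |α (n+1) - α n| = 2 / (((n:ℝ)+2) * ((n:ℝ)+3)) := by
      rw [hαval, hαval]
      push_cast
      rw [abs_of_nonneg (by rw [sub_nonneg, div_le_div_iff₀ (by positivity) (by positivity)]; nlinarith)]
      field_simp
      ring
    have hγd : |γ (n+1) - γ n| / γ (n+1) = 1 / (((n:ℝ)+1) * ((n:ℝ)+3)) := by
      rw [hγ, hγ]
      push_cast
      rw [abs_of_nonpos (by rw [sub_nonpos, div_le_div_iff₀ (by positivity) (by positivity)]; nlinarith)]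
      field_simp
      ring
    have A : dist u (T (n+1) (x (n+1))) ≤ 2 * M := by
      calc dist u (T (n+1) (x (n+1))) ≤ dist u p + dist p (T (n+1) (x (n+1))) := dist_triangle _ _ _
        _ ≤ M + M := add_le_add hM2 (hpt (n+1) (n+1))
        _ = 2 * M := by ring
    have B : dist (x n) (T (n+1) (x n)) ≤ 2 * M := by
      calc dist (x n) (T (n+1) (x n)) ≤ dist (x n) p + dist p (T (n+1) (x n)) := dist_triangle _ _ _
        _ ≤ M + M := add_le_add (hbnd n) (hpt (n+1) n)
        _ = 2 * M := by ring
    have C : dist (T (n+1) (x (n+1))) (T n (x n)) ≤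
        dist (x (n+1)) (x n) + 1 / (((n:ℝ)+1) * ((n:ℝ)+3)) * (2 * M) := by
      have hc := hC1 (x n) (n+1) n
      rw [hγd] at hc
      calc dist (T (n+1) (x (n+1))) (T n (x n))
          ≤ dist (T (n+1) (x (n+1))) (T (n+1) (x n)) + dist (T (n+1) (x n)) (T n (x n)) :=
            dist_triangle _ _ _
        _ ≤ dist (x (n+1)) (x n) + 1 / (((n:ℝ)+1) * ((n:ℝ)+3)) * dist (x n) (T (n+1) (x n)) :=
            add_le_add (hT (n+1) _ _) hc
        _ ≤ dist (x (n+1)) (x n) + 1 / (((n:ℝ)+1) * ((n:ℝ)+3)) * (2 * M) := by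
            gcongr <;> positivity
    have t1 : dist (x (n+2)) (W u (T (n+1) (x (n+1))) (α n)) ≤
        2 / (((n:ℝ)+2) * ((n:ℝ)+3)) * (2 * M) := by
      rw [hxrec (n+1), W2 u _ _ (hαmem (n+1)) _ (hαmem n), hαd]
      gcongr <;> positivity
    have t2 : dist (W u (T (n+1) (x (n+1))) (α n)) (x (n+1)) ≤
        α n * dist (T (n+1) (x (n+1))) (T n (x n)) := by
      nth_rewrite 2 [hxrec n]
      have := W4 u u (T (n+1) (x (n+1))) (T n (x n)) (α n) (hαmem n)
      simpa using this
    have hαn0 := (hαmem n).1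
    have hαn1 : α n = (n:ℝ) / ((n:ℝ) + 2) := hαval n
    have final : dist (x (n+2)) (x (n+1)) ≤
        2 / (((n:ℝ)+2) * ((n:ℝ)+3)) * (2 * M) +
        α n * (dist (x (n+1)) (x n) + 1 / (((n:ℝ)+1) * ((n:ℝ)+3)) * (2 * M)) := by
      calc dist (x (n+2)) (x (n+1)) ≤
          dist (x (n+2)) (W u (T (n+1) (x (n+1))) (α n)) +
          dist (W u (T (n+1) (x (n+1))) (α n)) (x (n+1)) := dist_triangle _ _ _
        _ ≤ 2 / (((n:ℝ)+2) * ((n:ℝ)+3)) * (2 * M) +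
            α n * (dist (x (n+1)) (x n) + 1 / (((n:ℝ)+1) * ((n:ℝ)+3)) * (2 * M)) := by
            refine add_le_add t1 (t2.trans ?_)
            gcongr
    have goalcast : (6:ℝ) * M / ((n:ℝ) + 1 + 2) = 6 * M / ((n:ℝ) + 3) := by ring_nf
    have key : 2 / (((n:ℝ)+2) * ((n:ℝ)+3)) * (2 * M) +
        α n * (6 * M / ((n:ℝ)+2) + 1 / (((n:ℝ)+1) * ((n:ℝ)+3)) * (2 * M)) ≤
        6 * M / ((n:ℝ) + 3) := by
      rw [hαn1]
      have e : 6 * M / ((n:ℝ) + 3) -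
          (2 / (((n:ℝ)+2) * ((n:ℝ)+3)) * (2 * M) +
           (n:ℝ) / ((n:ℝ)+2) * (6 * M / ((n:ℝ)+2) + 1 / (((n:ℝ)+1) * ((n:ℝ)+3)) * (2 * M))) =
          M * (14 * (n:ℝ) + 16) / (((n:ℝ)+1) * (((n:ℝ)+2)^2) * ((n:ℝ)+3)) := by
        field_simp
        ring
      have pos : 0 ≤ M * (14 * (n:ℝ) + 16) / (((n:ℝ)+1) * (((n:ℝ)+2)^2) * ((n:ℝ)+3)) := by positivity
      linarith
    have ihstep : α n * (dist (x (n+1)) (x n) + 1 / (((n:ℝ)+1) * ((n:ℝ)+3)) * (2 * M)) ≤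
        α n * (6 * M / ((n:ℝ)+2) + 1 / (((n:ℝ)+1) * ((n:ℝ)+3)) * (2 * M)) := by
      have := ih
      gcongr
    push_cast
    show dist (x (n+2)) (x (n+1)) ≤ 6 * M / ((n:ℝ) + 1 + 2)
    rw [goalcast]
    linarith [final, ihstep, key]
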